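/- For a primary element n = a+bi ∈ ℤ[i] with a ≡ 1 (mod 4) (equivalently (-1)^((N(n)-1)/4) = 1), the supplement law gives (i/n)₄ = i^((1-a)/2) = (-1)^((a²-1)/8). -/

import Mathlib

noncomputable section
open Complex
open scoped ComplexConjugate Classical

/-- `n` is primary: `n ≡ 1 mod (1+i)^3` in `ℤ[i]`. -/
def IsPrimary (n : GaussianInt) : Prop := (⟨1, 1⟩ : GaussianInt) ^ 3 ∣ n - 1

/-- The additive character `ẽ(z) = exp(2πi (z/(2i) - z̄/(2i)))` on `ℚ(i)`. -/
def echar (z : ℂ) : ℂ :=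
  Complex.exp (2 * Real.pi * I * (z / (2 * I) - (conj z) / (2 * I)))

/-- The quartic residue symbol `(a/ϖ)₄` at a Gaussian prime `ϖ`: the unique fourth root of
unity `ζ ∈ {1, -1, i, -i}` with `a^((N(ϖ)-1)/4) ≡ ζ (mod ϖ)`, or `0` if `ϖ ∣ a`. -/
def quarticSymbolPrime (a ϖ : GaussianInt) : GaussianInt :=
  if ϖ ∣ a then 0
  else if h : ∃ ζ : GaussianInt,
      ζ ∈ ({1, -1, ⟨0, 1⟩, ⟨0, -1⟩} : Set GaussianInt) ∧
      ϖ ∣ a ^ (((Zsqrtd.norm ϖ).natAbs - 1) / 4) - ζ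
    then h.choose else 0

/-- The quartic residue symbol `(a/n)₄` for odd `n ∈ ℤ[i]`, extended multiplicatively from
Gaussian primes, with value `1` when `n` is a unit. -/
def quarticSymbol (a n : GaussianInt) : GaussianInt :=
  if n = 0 then 0
  else ((UniqueFactorizationMonoid.factors n).map fun ϖ => quarticSymbolPrime a ϖ).prod

/-- The twisted quartic Gauss sum `g(k,n) = Σ_{x mod n} (x/n)₄ ẽ(kx/n)`. -/
def gaussSumK (k n : GaussianInt) : ℂ :=
  ∑ᶠ x : GaussianInt ⧸ Ideal.span {n},
    GaussianInt.toComplex (quarticSymbol x.out n) *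
      echar (GaussianInt.toComplex k * GaussianInt.toComplex x.out / GaussianInt.toComplex n)

/-- The quartic Gauss sum `g(n) = g(1,n)`. -/
def quarticGaussSum (n : GaussianInt) : ℂ := gaussSumK 1 n


namespace SupplAux

abbrev ii : GaussianInt := ⟨0, 1⟩

lemma ii_pow_four : ii ^ 4 = 1 := by decide

lemma ii_pow_mod (k : ℕ) : ii ^ k = ii ^ (k % 4) := by
  conv_lhs => rw [← Nat.div_add_mod k 4]
  rw [pow_add, pow_mul, ii_pow_four, one_pow, one_mul]

lemma ii_pow_mem (k : ℕ) :
    ii ^ k ∈ ({1, -1, ⟨0, 1⟩, ⟨0, -1⟩} : Set GaussianInt) := by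
  rw [ii_pow_mod]
  have h : k % 4 < 4 := Nat.mod_lt _ (by norm_num)
  simp only [Set.mem_insert_iff, Set.mem_singleton_iff]
  interval_cases h : k % 4
  · left; decide
  · right; right; left; decide
  · right; left; decide
  · right; right; right; decide

/-- norm natAbs as a monoid hom -/
def NAbs : GaussianInt →* ℕ where
  toFun z := (Zsqrtd.norm z).natAbs
  map_one' := by decide
  map_mul' x y := by show (Zsqrtd.norm (x*y)).natAbs = _; rw [Zsqrtd.norm_mul, Int.natAbs_mul]

lemma nabs_dvd {x y : GaussianInt} (h : x ∣ y) : NAbs x ∣ NAbs y := map_dvd NAbs h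

lemma unique_root (ϖ : GaussianInt) (hp : Prime ϖ) (hodd : Odd (NAbs ϖ))
    {ζ1 ζ2 : GaussianInt} (h1 : ζ1 ∈ ({1, -1, ⟨0, 1⟩, ⟨0, -1⟩} : Set GaussianInt))
    (h2 : ζ2 ∈ ({1, -1, ⟨0, 1⟩, ⟨0, -1⟩} : Set GaussianInt)) (hd : ϖ ∣ ζ1 - ζ2) :
    ζ1 = ζ2 := by
  have hne1 : NAbs ϖ ≠ 1 := fun h1 => hp.not_unit (Zsqrtd.norm_eq_one_iff.mp h1)
  have key : NAbs ϖ ∣ 8 → False := by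
    intro hdvd
    have hle : NAbs ϖ ≤ 8 := Nat.le_of_dvd (by norm_num) hdvd
    rw [Nat.odd_iff] at hodd
    interval_cases h : (NAbs ϖ) <;> omega
  have hnd := nabs_dvd hd
  simp only [Set.mem_insert_iff, Set.mem_singleton_iff] at h1 h2
  rcases h1 with rfl | rfl | rfl | rfl <;> rcases h2 with rfl | rfl | rfl | rfl <;>
    first
      | rfl
      | (exact absurd (dvd_trans hnd (by decide)) (fun hh => key hh))

lemma qsp_eq (ϖ : GaussianInt) (hp : Prime ϖ) (hodd : Odd (NAbs ϖ)) :
    quarticSymbolPrime ⟨0,1⟩ ϖ = ii ^ ((NAbs ϖ - 1) / 4) := by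
  have hiu : IsUnit ii := IsUnit.of_mul_eq_one (a := ii) ⟨0,-1⟩ (by decide)
  have hnd : ¬ ϖ ∣ ii := fun hdd => hp.not_unit (isUnit_of_dvd_unit hdd hiu)
  have hex : ∃ ζ : GaussianInt,
      ζ ∈ ({1, -1, ⟨0, 1⟩, ⟨0, -1⟩} : Set GaussianInt) ∧
      ϖ ∣ ii ^ (((Zsqrtd.norm ϖ).natAbs - 1) / 4) - ζ :=
    ⟨ii ^ (((Zsqrtd.norm ϖ).natAbs - 1) / 4), ii_pow_mem _, by simp⟩
  simp only [quarticSymbolPrime]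
  rw [if_neg hnd, dif_pos hex]
  obtain ⟨hmem, hdvd⟩ := hex.choose_spec
  exact (unique_root ϖ hp hodd (ii_pow_mem _) hmem hdvd).symm

lemma prod_mod4 (s : Multiset ℕ) (hs : ∀ m ∈ s, m % 4 = 1) : s.prod % 4 = 1 := by
  induction s using Multiset.induction with
  | empty => simp
  | cons m s ih =>
    rw [Multiset.prod_cons, Nat.mul_mod, hs m (Multiset.mem_cons_self _ _),
      ih (fun x hx => hs x (Multiset.mem_cons_of_mem hx))]

lemma f_mul {x y : ℕ} (hx : x % 4 = 1) (hy : y % 4 = 1) :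
    ii ^ ((x * y - 1) / 4) = ii ^ ((x - 1) / 4) * ii ^ ((y - 1) / 4) := by
  obtain ⟨u, rfl⟩ : ∃ u, x = 4 * u + 1 := ⟨x / 4, by omega⟩
  obtain ⟨v, rfl⟩ : ∃ v, y = 4 * v + 1 := ⟨y / 4, by omega⟩
  have h1 : ((4 * u + 1) * (4 * v + 1) - 1) / 4 = 4 * (u * v) + (u + v) := by
    have : (4 * u + 1) * (4 * v + 1) = 4 * (4 * (u * v) + (u + v)) + 1 := by ring
    omega
  have h2 : (4 * u + 1 - 1) / 4 = u := by omega
  have h3 : (4 * v + 1 - 1) / 4 = v := by omega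
  rw [h1, h2, h3, pow_add, pow_mul, ii_pow_four, one_pow, one_mul, pow_add]

lemma f_prod (s : Multiset ℕ) (hs : ∀ m ∈ s, m % 4 = 1) :
    (s.map (fun m => ii ^ ((m - 1) / 4))).prod = ii ^ ((s.prod - 1) / 4) := by
  induction s using Multiset.induction with
  | empty => simp
  | cons m s ih =>
    rw [Multiset.map_cons, Multiset.prod_cons, Multiset.prod_cons,
      ih (fun x hx => hs x (Multiset.mem_cons_of_mem hx)),
      f_mul (hs m (Multiset.mem_cons_self _ _))
        (prod_mod4 s (fun x hx => hs x (Multiset.mem_cons_of_mem hx)))]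

lemma norm_mod4 {z : GaussianInt} (h : Odd (NAbs z)) : NAbs z % 4 = 1 := by
  have hnn : 0 ≤ Zsqrtd.norm z := GaussianInt.norm_nonneg z
  have hn : Zsqrtd.norm z = z.re * z.re + z.im * z.im := by
    simp [Zsqrtd.norm]
  have hoddz : Odd (Zsqrtd.norm z) := Int.natAbs_odd.mp h
  show (Zsqrtd.norm z).natAbs % 4 = 1
  rcases Int.even_or_odd z.re with ⟨p, hp⟩ | ⟨p, hp⟩ <;>
    rcases Int.even_or_odd z.im with ⟨q, hq⟩ | ⟨q, hq⟩
  · exfalso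
    have h2 : Zsqrtd.norm z = 2 * (2 * (p * p + q * q)) := by rw [hn, hp, hq]; ring
    exact (Int.not_odd_iff_even.mpr ⟨2 * (p * p + q * q), by rw [h2]; ring⟩) hoddz
  · have h4 : Zsqrtd.norm z = 4 * (p * p + q * q + q) + 1 := by rw [hn, hp, hq]; ring
    generalize (p * p + q * q + q) = K at h4
    omega
  · have h4 : Zsqrtd.norm z = 4 * (p * p + p + q * q) + 1 := by rw [hn, hp, hq]; ring
    generalize (p * p + p + q * q) = K at h4
    omega
  · exfalso
    have h2 : Zsqrtd.norm z = 2 * (2 * (p * p + p + q * q + q) + 1) := by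
      rw [hn, hp, hq]; ring
    exact (Int.not_odd_iff_even.mpr ⟨2 * (p * p + p + q * q + q) + 1, by rw [h2]; ring⟩) hoddz

end SupplAux

open SupplAux UniqueFactorizationMonoid in
/-- for primary `n = a+bi` with `a ≡ 1 (mod 4)`, the supplement law gives
`(i/n)₄ = i^((1-a)/2) = (-1)^((a²-1)/8)`. -/
theorem supplement_i_symbol (a b : ℤ) (h : IsPrimary (⟨a, b⟩ : GaussianInt))
    (ha : a ≡ 1 [ZMOD 4]) :
    GaussianInt.toComplex (quarticSymbol ⟨0, 1⟩ (⟨a, b⟩ : GaussianInt)) = I ^ ((1 - a) / 2) ∧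
      (I : ℂ) ^ ((1 - a) / 2) = (-1 : ℂ) ^ ((a ^ 2 - 1) / 8) := by
  have ha' : a % 4 = 1 := by
    have h1 : a % 4 = 1 % 4 := ha
    omega
  obtain ⟨s, hs⟩ : ∃ s, a = 4 * s + 1 := ⟨a / 4, by omega⟩
  -- extract b = 4t from primariness
  obtain ⟨c, hc⟩ := h
  rw [show (⟨1,1⟩ : GaussianInt)^3 = ⟨-2, 2⟩ from by decide] at hc
  have hre := congrArg Zsqrtd.re hc
  have him := congrArg Zsqrtd.im hc
  simp only [Zsqrtd.re_sub, Zsqrtd.im_sub, Zsqrtd.re_one, Zsqrtd.im_one,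
    Zsqrtd.re_mul, Zsqrtd.im_mul] at hre him
  obtain ⟨t, ht⟩ : ∃ t, b = 4 * t := ⟨b / 4, by omega⟩
  clear hc hre him
  set n : GaussianInt := ⟨a, b⟩ with hn
  have hn0 : n ≠ 0 := by
    intro h0
    have h1 : a = 0 ∧ b = 0 := by
      constructor
      · exact congrArg Zsqrtd.re h0
      · exact congrArg Zsqrtd.im h0
    omega
  -- the norm of n
  have hS : 0 ≤ s * s := mul_self_nonneg s
  have hT : 0 ≤ t * t := mul_self_nonneg t
  have hK : ((NAbs n : ℤ)) = 16 * (s * s) + 8 * s + 16 * (t * t) + 1 := by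
    have h1 : Zsqrtd.norm n = a * a + b * b := by simp [Zsqrtd.norm, hn]
    have h2 : ((NAbs n : ℤ)) = Zsqrtd.norm n :=
      Int.natAbs_of_nonneg (GaussianInt.norm_nonneg n)
    rw [h2, h1, hs, ht]; ring
  have hoddN : Odd (NAbs n) := by rw [Nat.odd_iff]; omega
  -- prime factors are odd
  have hfac : ∀ ϖ ∈ factors n, Prime ϖ ∧ Odd (NAbs ϖ) := by
    intro ϖ hϖ
    refine ⟨prime_of_factor ϖ hϖ, ?_⟩
    have hd : NAbs ϖ ∣ NAbs n := nabs_dvd (dvd_of_mem_factors hϖ)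
    rw [Nat.odd_iff] at hoddN ⊢
    rcases Nat.even_or_odd (NAbs ϖ) with hev | hodd
    · exfalso
      obtain ⟨k, hk⟩ := hd
      obtain ⟨r, hr⟩ := hev
      have h2 : 2 ∣ NAbs n := ⟨r * k, by rw [hk, hr]; ring⟩
      omega
    · rwa [Nat.odd_iff] at hodd
  -- value of the symbol
  have hsym : quarticSymbol ⟨0,1⟩ n = ii ^ ((NAbs n - 1) / 4) := by
    rw [quarticSymbol, if_neg hn0]
    rw [Multiset.map_congr rfl (fun ϖ hϖ => qsp_eq ϖ (hfac ϖ hϖ).1 (hfac ϖ hϖ).2)]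
    rw [show (fun ϖ : GaussianInt => ii ^ ((NAbs ϖ - 1) / 4))
        = (fun m : ℕ => ii ^ ((m - 1) / 4)) ∘ NAbs from rfl]
    have hprod : ((factors n).map NAbs).prod = NAbs n := by
      rw [Multiset.prod_hom _ NAbs]
      obtain ⟨u, hu⟩ := factors_prod hn0
      have hNu : NAbs (u : GaussianInt) = 1 := Zsqrtd.norm_eq_one_iff.mpr u.isUnit
      calc NAbs (factors n).prod
          = NAbs (factors n).prod * NAbs (u : GaussianInt) := by rw [hNu, mul_one]
        _ = NAbs ((factors n).prod * u) := (map_mul NAbs _ _).symm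
        _ = NAbs n := by rw [hu]
    rw [← Multiset.map_map, f_prod, hprod]
    intro m hm
    obtain ⟨ϖ, hϖ, rfl⟩ := Multiset.mem_map.mp hm
    exact norm_mod4 (hfac ϖ hϖ).2
  -- pass to ℂ
  have hIone : (I : ℂ) ^ (4 : ℤ) = 1 := by rw [show (4:ℤ) = ((4:ℕ):ℤ) from rfl, zpow_natCast]; exact Complex.I_pow_four
  have hItwo : (I : ℂ) ^ (2 : ℤ) = -1 := by rw [show (2:ℤ) = ((2:ℕ):ℤ) from rfl, zpow_natCast]; exact Complex.I_sq
  have hL : GaussianInt.toComplex (quarticSymbol ⟨0,1⟩ n) = (-1 : ℂ) ^ s := by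
    rw [hsym, map_pow]
    have hii : GaussianInt.toComplex ii = I := by
      simp [GaussianInt.toComplex_def']
    rw [hii, ← zpow_natCast]
    have he : (((NAbs n - 1) / 4 : ℕ) : ℤ) = 4 * ((s * s) + (t * t)) + 2 * s := by omega
    rw [he, zpow_add₀ Complex.I_ne_zero, zpow_mul, zpow_mul, hIone, hItwo, one_zpow, one_mul]
  have hR : (I : ℂ) ^ ((1 - a) / 2) = (-1 : ℂ) ^ s := by
    rw [show (1 - a) / 2 = 2 * (-s) from by omega, zpow_mul, hItwo, zpow_neg, ← inv_zpow,
      inv_neg, inv_one]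
  have hR2 : (-1 : ℂ) ^ ((a ^ 2 - 1) / 8) = (-1 : ℂ) ^ s := by
    rw [show (a ^ 2 - 1) / 8 = 2 * (s * s) + s from by
      rw [show a ^ 2 - 1 = 8 * (2 * (s * s) + s) from by rw [hs]; ring,
        Int.mul_ediv_cancel_left _ (by norm_num)]]
    rw [zpow_add₀ (by norm_num : (-1:ℂ) ≠ 0), zpow_mul]
    norm_num
  exact ⟨hL.trans hR.symm, hR.trans hR2.symm⟩
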